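/- The cubic Q(λ) = (a³+(a−b)²)λ³ − 3(a³+(a−b)²)λ² + 3(a−b)²λ + 4a³ − (a−b)² has discriminant equal to −108·a⁶·(a−b)²·(a³+(a−b)²); hence Q has three distinct real roots if and only if a³ + (a−b)² < 0 (assuming a ≠ 0, a ≠ b). -/

import Mathlib

set_option maxHeartbeats 1000000


/-- A real quadratic vanishing at three distinct points is identically zero
(coefficientwise). -/
lemma quad_three_roots_zero (A B C x y z : ℝ) (hxy : x ≠ y) (hxz : x ≠ z) (hyz : y ≠ z)
    (h1 : A * x ^ 2 + B * x + C = 0) (h2 : A * y ^ 2 + B * y + C = 0)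
    (h3 : A * z ^ 2 + B * z + C = 0) : A = 0 ∧ B = 0 ∧ C = 0 := by
  have k1 : (x - y) * (A * (x + y) + B) = 0 := by linear_combination h1 - h2
  have k2 : (x - z) * (A * (x + z) + B) = 0 := by linear_combination h1 - h3
  have l1 : A * (x + y) + B = 0 :=
    (mul_eq_zero.mp k1).resolve_left (sub_ne_zero.mpr hxy)
  have l2 : A * (x + z) + B = 0 :=
    (mul_eq_zero.mp k2).resolve_left (sub_ne_zero.mpr hxz)
  have kA : (y - z) * A = 0 := by linear_combination l1 - l2
  have hA : A = 0 := (mul_eq_zero.mp kA).resolve_left (sub_ne_zero.mpr hyz)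
  have hB : B = 0 := by linear_combination l1 - (x + y) * hA
  have hC : C = 0 := by linear_combination h1 - x ^ 2 * hA - x * hB
  exact ⟨hA, hB, hC⟩

/-- The cubic `Q(λ) = (a³+(a−b)²)λ³ − 3(a³+(a−b)²)λ² + 3(a−b)²λ + 4a³ − (a−b)²` has
discriminant `−108·a⁶·(a−b)²·(a³+(a−b)²)`; hence (for `a ≠ 0`, `a ≠ b`,
`a³+(a−b)² ≠ 0`) it has three distinct real roots iff `a³ + (a−b)² < 0`. -/
theorem type2_plus_fold_cubic_discriminant (a b : ℝ) (ha : a ≠ 0) (hab : a ≠ b)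
    (hK : a ^ 3 + (a - b) ^ 2 ≠ 0)
    (Q : ℝ → ℝ)
    (hQ : ∀ lam, Q lam = (a ^ 3 + (a - b) ^ 2) * lam ^ 3 -
      3 * (a ^ 3 + (a - b) ^ 2) * lam ^ 2 + 3 * (a - b) ^ 2 * lam +
      4 * a ^ 3 - (a - b) ^ 2) :
    (18 * (a ^ 3 + (a - b) ^ 2) * (-3 * (a ^ 3 + (a - b) ^ 2)) * (3 * (a - b) ^ 2) *
          (4 * a ^ 3 - (a - b) ^ 2) -
        4 * (-3 * (a ^ 3 + (a - b) ^ 2)) ^ 3 * (4 * a ^ 3 - (a - b) ^ 2) +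
        (-3 * (a ^ 3 + (a - b) ^ 2)) ^ 2 * (3 * (a - b) ^ 2) ^ 2 -
        4 * (a ^ 3 + (a - b) ^ 2) * (3 * (a - b) ^ 2) ^ 3 -
        27 * (a ^ 3 + (a - b) ^ 2) ^ 2 * (4 * a ^ 3 - (a - b) ^ 2) ^ 2 =
      -108 * a ^ 6 * (a - b) ^ 2 * (a ^ 3 + (a - b) ^ 2)) ∧
    ((∃ r₁ r₂ r₃ : ℝ, r₁ ≠ r₂ ∧ r₁ ≠ r₃ ∧ r₂ ≠ r₃ ∧
        Q r₁ = 0 ∧ Q r₂ = 0 ∧ Q r₃ = 0) ↔ a ^ 3 + (a - b) ^ 2 < 0) := by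
  refine ⟨by ring, ?_⟩
  have hD : (0:ℝ) < (a - b) ^ 2 := by
    have := sub_ne_zero.mpr hab; positivity
  have ha6 : (0:ℝ) < a ^ 6 := by positivity
  constructor
  · rintro ⟨r₁, r₂, r₃, h12, h13, h23, hq1, hq2, hq3⟩
    rw [hQ] at hq1 hq2 hq3
    -- coefficients of  Q(λ) - K (λ-r₁)(λ-r₂)(λ-r₃)
    set K := a ^ 3 + (a - b) ^ 2 with hKdef
    have hA1 : (K * (r₁ + r₂ + r₃) - 3 * K) * r₁ ^ 2 +
        (3 * (a - b) ^ 2 - K * (r₁ * r₂ + r₁ * r₃ + r₂ * r₃)) * r₁ +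
        (4 * a ^ 3 - (a - b) ^ 2 + K * (r₁ * r₂ * r₃)) = 0 := by linear_combination hq1
    have hA2 : (K * (r₁ + r₂ + r₃) - 3 * K) * r₂ ^ 2 +
        (3 * (a - b) ^ 2 - K * (r₁ * r₂ + r₁ * r₃ + r₂ * r₃)) * r₂ +
        (4 * a ^ 3 - (a - b) ^ 2 + K * (r₁ * r₂ * r₃)) = 0 := by linear_combination hq2
    have hA3 : (K * (r₁ + r₂ + r₃) - 3 * K) * r₃ ^ 2 +
        (3 * (a - b) ^ 2 - K * (r₁ * r₂ + r₁ * r₃ + r₂ * r₃)) * r₃ +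
        (4 * a ^ 3 - (a - b) ^ 2 + K * (r₁ * r₂ * r₃)) = 0 := by linear_combination hq3
    obtain ⟨hA, hB, hC⟩ := quad_three_roots_zero _ _ _ _ _ _ h12 h13 h23 hA1 hA2 hA3
    have he1 : r₁ + r₂ + r₃ = 3 := by
      have : K * (r₁ + r₂ + r₃ - 3) = 0 := by linear_combination hA
      have := (mul_eq_zero.mp this).resolve_left hK
      linarith [this]
    have he2 : K * (r₁ * r₂ + r₁ * r₃ + r₂ * r₃) = 3 * (a - b) ^ 2 := by linarith [hB]
    have he3 : K * (r₁ * r₂ * r₃) = (a - b) ^ 2 - 4 * a ^ 3 := by linarith [hC]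
    -- discriminant identity via Vieta
    have hdisc : K ^ 4 * ((r₁ - r₂) * (r₁ - r₃) * (r₂ - r₃)) ^ 2 =
        -108 * a ^ 6 * (a - b) ^ 2 * K := by
      have hr3 : r₃ = 3 - r₁ - r₂ := by linarith
      subst hr3
      linear_combination
        (9 * K ^ 2 * (K * (r₁ * r₂ + r₁ * (3 - r₁ - r₂) + r₂ * (3 - r₁ - r₂)) + 3 * (a - b) ^ 2)
          - 4 * K * ((K * (r₁ * r₂ + r₁ * (3 - r₁ - r₂) + r₂ * (3 - r₁ - r₂))) ^ 2
            + 3 * (a - b) ^ 2 * (K * (r₁ * r₂ + r₁ * (3 - r₁ - r₂) + r₂ * (3 - r₁ - r₂)))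
            + 9 * (a - b) ^ 4)
          + 54 * K ^ 2 * (K * (r₁ * r₂ * (3 - r₁ - r₂)))) * he2 +
        (-108 * K ^ 3 + 54 * K ^ 2 * (3 * (a - b) ^ 2)
          - 27 * K ^ 2 * (K * (r₁ * r₂ * (3 - r₁ - r₂)) + ((a - b) ^ 2 - 4 * a ^ 3))) * he3
    -- conclude K < 0
    by_contra hKpos
    push_neg at hKpos
    have hKpos' : 0 < K := lt_of_le_of_ne hKpos (Ne.symm hK)
    have hP : 0 < ((r₁ - r₂) * (r₁ - r₃) * (r₂ - r₃)) ^ 2 := by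
      have : (r₁ - r₂) * (r₁ - r₃) * (r₂ - r₃) ≠ 0 := by
        apply mul_ne_zero; apply mul_ne_zero <;> exact sub_ne_zero.mpr ‹_›
        exact sub_ne_zero.mpr h23
      positivity
    have hL : 0 < K ^ 4 * ((r₁ - r₂) * (r₁ - r₃) * (r₂ - r₃)) ^ 2 :=
      mul_pos (pow_pos hKpos' 4) hP
    have hR : -108 * a ^ 6 * (a - b) ^ 2 * K < 0 := by
      have := mul_pos (mul_pos ha6 hD) hKpos'
      linarith [this]
    linarith [hdisc, hL, hR]
  · intro hKneg
    set K := a ^ 3 + (a - b) ^ 2 with hKdef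
    have ha3 : a ^ 3 < 0 := by nlinarith
    have hu : 0 < a ^ 3 / K := div_pos_iff.mpr (Or.inr ⟨ha3, hKneg⟩)
    set c := Real.sqrt (a ^ 3 / K) with hcdef
    have hc0 : 0 ≤ c := Real.sqrt_nonneg _
    have hc2 : K * c ^ 2 = a ^ 3 := by
      have h : c ^ 2 = a ^ 3 / K := Real.sq_sqrt hu.le
      rw [h, mul_div_cancel₀ _ hK]
    have hcsq : 1 < c ^ 2 := by
      by_contra hle
      push_neg at hle
      nlinarith [mul_nonneg (neg_nonneg.mpr hKneg.le) (sub_nonneg.mpr hle), hc2, hD, hKdef]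
    have hc1 : 1 < c := by nlinarith [hcsq, hc0]
    have hQc : Continuous Q := by
      have : Q = fun lam => K * lam ^ 3 - 3 * K * lam ^ 2 + 3 * (a - b) ^ 2 * lam +
          4 * a ^ 3 - (a - b) ^ 2 := funext hQ
      rw [this]; fun_prop
    -- values
    have v1 : Q (1 - 2 * c) = 2 * a ^ 3 * (1 - c) := by
      rw [hQ]; linear_combination (-8 * c) * hc2
    have v2 : Q 1 = 2 * a ^ 3 := by rw [hQ]; ring
    have v3 : Q (1 + c) = 2 * a ^ 3 * (1 - c) := by
      rw [hQ]; linear_combination c * hc2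
    have v4 : Q (1 + 2 * c) = 2 * a ^ 3 * (1 + c) := by
      rw [hQ]; linear_combination (8 * c) * hc2
    have hpos : 0 < 2 * a ^ 3 * (1 - c) := by nlinarith
    have hneg2 : 2 * a ^ 3 < 0 := by linarith
    have hneg4 : 2 * a ^ 3 * (1 + c) < 0 := by nlinarith
    -- three roots via IVT
    obtain ⟨r₁, hr₁m, hr₁⟩ := intermediate_value_Ioo' (by nlinarith : (1:ℝ) - 2 * c ≤ 1)
      hQc.continuousOn (by rw [v1, v2]; exact ⟨hneg2, hpos⟩ : (0:ℝ) ∈ Set.Ioo (Q 1) (Q (1 - 2*c)))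
    obtain ⟨r₂, hr₂m, hr₂⟩ := intermediate_value_Ioo (by nlinarith : (1:ℝ) ≤ 1 + c)
      hQc.continuousOn (by rw [v2, v3]; exact ⟨hneg2, hpos⟩ : (0:ℝ) ∈ Set.Ioo (Q 1) (Q (1 + c)))
    obtain ⟨r₃, hr₃m, hr₃⟩ := intermediate_value_Ioo' (by nlinarith : (1:ℝ) + c ≤ 1 + 2 * c)
      hQc.continuousOn (by rw [v3, v4]; exact ⟨hneg4, hpos⟩ : (0:ℝ) ∈ Set.Ioo (Q (1 + 2*c)) (Q (1 + c)))
    refine ⟨r₁, r₂, r₃, ?_, ?_, ?_, hr₁, hr₂, hr₃⟩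
    · exact ne_of_lt (lt_trans hr₁m.2 hr₂m.1)
    · exact ne_of_lt (lt_trans hr₁m.2 (lt_trans hr₂m.1 (lt_trans hr₂m.2 hr₃m.1)))
    · exact ne_of_lt (lt_trans hr₂m.2 hr₃m.1)
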